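/- arXiv:2306.10211 — 2 statements merged into one kernel-verified Lean document; each statement's English description precedes it below -/
import Mathlib

section
/- Let κ > 0 and ξ ∈ ℝ³ with 0 < |ξ| ≤ √2·κ. Then there exist two pairs of unit vectors (d₁, d₂) and (d̃₁, d̃₂) in S² × S² such that κ(d₁ + d₂) = κ(d̃₁ + d̃₂) = ξ and the three unit vectors ξ/|ξ|, (d₂ - d₁)/|d₂ - d₁|, (d̃₂ - d̃₁)/|d̃₂ - d̃₁| are mutually orthogonal. -/
open RealInnerProductSpace

lemma stmt6_aux (κ : ℝ) (hκ : 0 < κ) (ξ u : EuclideanSpace ℝ (Fin 3)) (hu : ‖u‖ = 1)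
    (horth : (⟪ξ, u⟫ : ℝ) = 0) (t : ℝ) (ht : t ^ 2 = 1 - (‖ξ‖ / (2 * κ)) ^ 2) :
    ‖(2 * κ)⁻¹ • ξ + t • u‖ = 1 := by
  have h0 : (⟪(2 * κ)⁻¹ • ξ, t • u⟫ : ℝ) = 0 := by
    rw [real_inner_smul_left, real_inner_smul_right, horth]; ring
  have hsq : ‖(2 * κ)⁻¹ • ξ + t • u‖ ^ 2 = 1 := by
    rw [norm_add_sq_real, h0, norm_smul, norm_smul, hu]
    have h2κ : (0:ℝ) < 2 * κ := by linarith
    rw [Real.norm_eq_abs, Real.norm_eq_abs, abs_of_pos (inv_pos.mpr h2κ)]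
    have : (|t| * 1) ^ 2 = t ^ 2 := by rw [mul_one, sq_abs]
    rw [mul_pow, this, ht]
    field_simp
    ring
  nlinarith [norm_nonneg ((2 * κ)⁻¹ • ξ + t • u)]

/-- A nonzero frequency `ξ` with `|ξ| ≤ √2 κ` can be written as `κ(d₁+d₂) = κ(e₁+e₂)`
with unit vectors such that the directions `ξ/|ξ|`, `(d₂-d₁)/|d₂-d₁|`, `(e₂-e₁)/|e₂-e₁|`
are mutually orthogonal (in particular the differences are nonzero). -/
theorem stmt6 (κ : ℝ) (hκ : 0 < κ) (ξ : EuclideanSpace ℝ (Fin 3))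
    (hξ0 : 0 < ‖ξ‖) (hξ : ‖ξ‖ ≤ Real.sqrt 2 * κ) :
    ∃ d₁ d₂ e₁ e₂ : EuclideanSpace ℝ (Fin 3),
      ‖d₁‖ = 1 ∧ ‖d₂‖ = 1 ∧ ‖e₁‖ = 1 ∧ ‖e₂‖ = 1 ∧
      κ • (d₁ + d₂) = ξ ∧ κ • (e₁ + e₂) = ξ ∧
      d₂ - d₁ ≠ 0 ∧ e₂ - e₁ ≠ 0 ∧
      (⟪ξ, d₂ - d₁⟫ : ℝ) = 0 ∧ (⟪ξ, e₂ - e₁⟫ : ℝ) = 0 ∧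
      (⟪d₂ - d₁, e₂ - e₁⟫ : ℝ) = 0 := by
  have hξne : ξ ≠ 0 := by intro h; simp [h] at hξ0
  set K := (ℝ ∙ ξ)ᗮ with hKdef
  have hfin : Module.finrank ℝ K = 2 := by
    rw [hKdef]
    have h1 : Module.finrank ℝ (ℝ ∙ ξ) = 1 := finrank_span_singleton hξne
    have h2 := Submodule.finrank_add_finrank_orthogonal
      (K := ((ℝ ∙ ξ) : Submodule ℝ (EuclideanSpace ℝ (Fin 3))))
    have h3 : Module.finrank ℝ (EuclideanSpace ℝ (Fin 3)) = 3 := by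
      simp [finrank_euclideanSpace]
    rw [h1, h3] at h2
    omega
  let B := (stdOrthonormalBasis ℝ K).reindex (finCongr hfin)
  set v : EuclideanSpace ℝ (Fin 3) := (↑(B 0) : EuclideanSpace ℝ (Fin 3)) with hv
  set w : EuclideanSpace ℝ (Fin 3) := (↑(B 1) : EuclideanSpace ℝ (Fin 3)) with hw
  have hvK : (B 0 : K).1 ∈ K := (B 0).2
  have hwK : (B 1 : K).1 ∈ K := (B 1).2
  have hξv : (⟪ξ, v⟫ : ℝ) = 0 := hvK ξ (Submodule.mem_span_singleton_self ξ)
  have hξw : (⟪ξ, w⟫ : ℝ) = 0 := hwK ξ (Submodule.mem_span_singleton_self ξ)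
  have hvw : (⟪v, w⟫ : ℝ) = 0 := by
    have := B.orthonormal.2 (i := 0) (j := 1) (by decide)
    exact this
  have hvnorm : ‖v‖ = 1 := by
    have := B.orthonormal.1 0
    exact this
  have hwnorm : ‖w‖ = 1 := by
    have := B.orthonormal.1 1
    exact this
  set a : ℝ := ‖ξ‖ / (2 * κ) with ha
  have ha2 : a ^ 2 ≤ 1 / 2 := by
    have h2 : a ≤ Real.sqrt 2 / 2 := by
      rw [ha, div_le_div_iff₀ (by linarith) (by norm_num)]
      nlinarith
    have ha0 : 0 ≤ a := by positivity
    nlinarith [Real.sq_sqrt (by norm_num : (2:ℝ) ≥ 0), Real.sqrt_nonneg 2]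
  set b : ℝ := Real.sqrt (1 - a ^ 2) with hb
  have hb2 : b ^ 2 = 1 - a ^ 2 := Real.sq_sqrt (by linarith)
  have hbpos : 0 < b := Real.sqrt_pos.mpr (by linarith)
  have hnb2 : (-b) ^ 2 = 1 - a ^ 2 := by rw [neg_pow]; simp [hb2]
  refine ⟨(2 * κ)⁻¹ • ξ + (-b) • v, (2 * κ)⁻¹ • ξ + b • v,
          (2 * κ)⁻¹ • ξ + (-b) • w, (2 * κ)⁻¹ • ξ + b • w,
    stmt6_aux κ hκ ξ v hvnorm hξv (-b) hnb2,
    stmt6_aux κ hκ ξ v hvnorm hξv b hb2,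
    stmt6_aux κ hκ ξ w hwnorm hξw (-b) hnb2,
    stmt6_aux κ hκ ξ w hwnorm hξw b hb2, ?_, ?_, ?_, ?_, ?_, ?_, ?_⟩
  · have : κ • (((2 * κ)⁻¹ • ξ + (-b) • v) + ((2 * κ)⁻¹ • ξ + b • v))
        = (κ * ((2 * κ)⁻¹ * 2)) • ξ := by module
    rw [this]; rw [show κ * ((2 * κ)⁻¹ * 2) = 1 by field_simp, one_smul]
  · have : κ • (((2 * κ)⁻¹ • ξ + (-b) • w) + ((2 * κ)⁻¹ • ξ + b • w))
        = (κ * ((2 * κ)⁻¹ * 2)) • ξ := by module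
    rw [this]; rw [show κ * ((2 * κ)⁻¹ * 2) = 1 by field_simp, one_smul]
  · have hd : ((2 * κ)⁻¹ • ξ + b • v) - ((2 * κ)⁻¹ • ξ + (-b) • v) = (2 * b) • v := by
      module
    rw [hd]
    exact smul_ne_zero (by positivity) (by simp [← norm_pos_iff, hvnorm])
  · have hd : ((2 * κ)⁻¹ • ξ + b • w) - ((2 * κ)⁻¹ • ξ + (-b) • w) = (2 * b) • w := by
      module
    rw [hd]
    exact smul_ne_zero (by positivity) (by simp [← norm_pos_iff, hwnorm])
  · have hd : ((2 * κ)⁻¹ • ξ + b • v) - ((2 * κ)⁻¹ • ξ + (-b) • v) = (2 * b) • v := by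
      module
    rw [hd, real_inner_smul_right, hξv, mul_zero]
  · have hd : ((2 * κ)⁻¹ • ξ + b • w) - ((2 * κ)⁻¹ • ξ + (-b) • w) = (2 * b) • w := by
      module
    rw [hd, real_inner_smul_right, hξw, mul_zero]
  · have hd : ((2 * κ)⁻¹ • ξ + b • v) - ((2 * κ)⁻¹ • ξ + (-b) • v) = (2 * b) • v := by
      module
    have he : ((2 * κ)⁻¹ • ξ + b • w) - ((2 * κ)⁻¹ • ξ + (-b) • w) = (2 * b) • w := by
      module
    rw [hd, he, real_inner_smul_right, real_inner_smul_left, hvw, mul_zero, mul_zero]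
end

section
/- Let s > 0 and let β = 2s/(3+2s), α = 6/(3+2s). Suppose ε ∈ (0, e^{-e}), K ≥ (1/(2σ)) ln|ln ε| for some σ > 0, and |V̂(ξ)|² ≤ C(ε² + K^{-2}) for all |ξ| ≤ 2K, with ‖V‖_{H^s(ℝ³)} ≤ Q. Then ‖V‖²_{L²(ℝ³)} ≤ C' ( K^α ε² + K^{-β} (ln|ln ε|)^{-β} ) with C' depending only on s, C, Q, σ. -/
open MeasureTheory

set_option maxHeartbeats 1600000 in
/-- Case 2 of the increasing stability argument: if `K ≥ (1/(2σ)) ln|ln ε|` (and `K ≥ 1`),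
a pointwise bound `|V̂(ξ)|² ≤ C(ε² + K⁻²)` for `|ξ| ≤ 2K` together with the `H^s` bound
yields `‖V‖²_{L²} ≤ C' (K^α ε² + K^{-β} (ln|ln ε|)^{-β})` with `α = 6/(3+2s)`,
`β = 2s/(3+2s)` and `C'` depending only on `s, C, Q, σ`. (Plancherel is recorded as a
hypothesis relating `V` and its Fourier transform `Vhat`.) -/
theorem stmt19 (s C Q σ : ℝ) (hs : 0 < s) (hC : 0 < C) (hQ : 0 < Q) (hσ : 0 < σ) :
    ∃ C' > (0 : ℝ), ∀ (ε K : ℝ) (V Vhat : EuclideanSpace ℝ (Fin 3) → ℂ),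
      0 < ε → ε < Real.exp (-Real.exp 1) →
      1 ≤ K → (1 / (2 * σ)) * Real.log |Real.log ε| ≤ K →
      Measurable Vhat →
      Integrable (fun x => ‖V x‖ ^ 2) →
      Integrable (fun ξ : EuclideanSpace ℝ (Fin 3) => ‖Vhat ξ‖ ^ 2) →
      (∫ x, ‖V x‖ ^ 2) = (∫ ξ, ‖Vhat ξ‖ ^ 2) →
      Integrable (fun ξ : EuclideanSpace ℝ (Fin 3) => (1 + ‖ξ‖ ^ 2) ^ s * ‖Vhat ξ‖ ^ 2) →
      (∫ ξ : EuclideanSpace ℝ (Fin 3), (1 + ‖ξ‖ ^ 2) ^ s * ‖Vhat ξ‖ ^ 2) ≤ Q ^ 2 →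
      (∀ ξ : EuclideanSpace ℝ (Fin 3), ‖ξ‖ ≤ 2 * K →
        ‖Vhat ξ‖ ^ 2 ≤ C * (ε ^ 2 + K ^ (-2 : ℝ))) →
      (∫ x, ‖V x‖ ^ 2) ≤
        C' * (K ^ (6 / (3 + 2 * s)) * ε ^ 2 +
          K ^ (-(2 * s / (3 + 2 * s))) *
            (Real.log |Real.log ε|) ^ (-(2 * s / (3 + 2 * s)))) := by
  classical
  set t : ℝ := 3 + 2 * s with ht
  have ht0 : (0:ℝ) < t := by simp only [ht]; linarith
  set β : ℝ := 2 * s / t with hβ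
  have hβ0 : 0 < β := by positivity
  set c : ℝ := (volume (Metric.ball (0 : EuclideanSpace ℝ (Fin 3)) 1)).toReal with hcdef
  have hc : 0 < c := ENNReal.toReal_pos (Metric.measure_ball_pos volume 0 one_pos).ne'
    measure_ball_lt_top.ne
  refine ⟨(c * C + Q ^ 2) * (1 + (2 * σ) ^ β), by positivity, ?_⟩
  intro ε K V Vhat hε hεe hK1 hKσ hmV hiV hiVh hPlan hiS hS hpt
  have hK0 : (0:ℝ) < K := lt_of_lt_of_le one_pos hK1
  set L : ℝ := Real.log |Real.log ε| with hLdef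
  have hL1 : 1 < L := by
    have h1 : Real.log ε < -Real.exp 1 := by
      have := Real.log_lt_log hε hεe
      simpa [Real.log_exp] using this
    have h2 : Real.exp 1 < |Real.log ε| := by
      rw [abs_of_neg (by nlinarith [Real.exp_pos 1])]
      linarith
    have h3 := Real.log_lt_log (Real.exp_pos 1) h2
    rwa [Real.log_exp] at h3
  have hL0 : 0 < L := by linarith
  -- the radius
  set ρ : ℝ := K ^ (2 / t) with hρdef
  have hρ1 : 1 ≤ ρ := Real.one_le_rpow hK1 (by positivity)
  have hρ0 : 0 < ρ := lt_of_lt_of_le one_pos hρ1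
  have hρK : ρ ≤ 2 * K := by
    have : ρ ≤ K ^ (1:ℝ) := Real.rpow_le_rpow_of_exponent_le hK1
      (by rw [div_le_one ht0]; simp only [ht]; linarith)
    rw [Real.rpow_one] at this
    linarith
  set B : Set (EuclideanSpace ℝ (Fin 3)) := Metric.ball 0 ρ with hBdef
  have hBmeas : MeasurableSet B := measurableSet_ball
  have hvolB : (volume B).toReal = ρ ^ 3 * c := by
    rw [hBdef, Measure.addHaar_ball volume 0 hρ0.le]
    rw [ENNReal.toReal_mul, ENNReal.toReal_ofReal (by positivity)]
    norm_num [finrank_euclideanSpace_fin]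
    exact Or.inl (by rw [hcdef]; norm_num [finrank_euclideanSpace_fin])
  have hvolBfin : volume B < ⊤ := measure_ball_lt_top
  -- split the integral
  have hsplit : (∫ ξ, ‖Vhat ξ‖ ^ 2) =
      (∫ ξ in B, ‖Vhat ξ‖ ^ 2) + ∫ ξ in Bᶜ, ‖Vhat ξ‖ ^ 2 :=
    (integral_add_compl hBmeas hiVh).symm
  -- low frequencies
  have hlow : (∫ ξ in B, ‖Vhat ξ‖ ^ 2) ≤ ρ ^ 3 * c * (C * (ε ^ 2 + K ^ (-2:ℝ))) := by
    have hmono : (∫ ξ in B, ‖Vhat ξ‖ ^ 2) ≤ ∫ _ξ in B, C * (ε ^ 2 + K ^ (-2:ℝ)) := by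
      refine setIntegral_mono_on hiVh.integrableOn (integrableOn_const hvolBfin.ne)
        hBmeas ?_
      intro ξ hξ
      exact hpt ξ (le_trans (by simpa using (Metric.mem_ball.1 hξ).le) hρK)
    calc (∫ ξ in B, ‖Vhat ξ‖ ^ 2) ≤ ∫ _ξ in B, C * (ε ^ 2 + K ^ (-2:ℝ)) := hmono
      _ = (volume B).toReal * (C * (ε ^ 2 + K ^ (-2:ℝ))) := by
          rw [setIntegral_const, smul_eq_mul]; rfl
      _ = ρ ^ 3 * c * (C * (ε ^ 2 + K ^ (-2:ℝ))) := by rw [hvolB]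
  -- high frequencies
  have hhigh : (∫ ξ in Bᶜ, ‖Vhat ξ‖ ^ 2) ≤ (1 + ρ ^ 2) ^ (-s) * Q ^ 2 := by
    have hmono : (∫ ξ in Bᶜ, ‖Vhat ξ‖ ^ 2) ≤
        ∫ ξ in Bᶜ, (1 + ρ ^ 2) ^ (-s) * ((1 + ‖ξ‖ ^ 2) ^ s * ‖Vhat ξ‖ ^ 2) := by
      refine setIntegral_mono_on hiVh.integrableOn (hiS.const_mul _).integrableOn
        hBmeas.compl ?_
      intro ξ hξ
      have hρξ : ρ ≤ ‖ξ‖ := by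
        have := Metric.mem_ball.not.1 hξ
        simpa [dist_eq_norm] using not_lt.1 this
      have hpos : (0:ℝ) < (1 + ρ ^ 2) ^ s := Real.rpow_pos_of_pos (by positivity) _
      have h1 : (1 + ρ ^ 2 : ℝ) ^ s ≤ (1 + ‖ξ‖ ^ 2) ^ s :=
        Real.rpow_le_rpow (by positivity) (by nlinarith) hs.le
      rw [Real.rpow_neg (by positivity), ← mul_assoc, inv_mul_eq_div]
      exact le_mul_of_one_le_left (by positivity) ((one_le_div hpos).2 h1)
    have hnn : 0 ≤ᵐ[volume] fun ξ : EuclideanSpace ℝ (Fin 3) =>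
        (1 + ‖ξ‖ ^ 2) ^ s * ‖Vhat ξ‖ ^ 2 :=
      Filter.Eventually.of_forall fun ξ => by positivity
    calc (∫ ξ in Bᶜ, ‖Vhat ξ‖ ^ 2)
        ≤ ∫ ξ in Bᶜ, (1 + ρ ^ 2) ^ (-s) * ((1 + ‖ξ‖ ^ 2) ^ s * ‖Vhat ξ‖ ^ 2) := hmono
      _ = (1 + ρ ^ 2) ^ (-s) * ∫ ξ in Bᶜ, (1 + ‖ξ‖ ^ 2) ^ s * ‖Vhat ξ‖ ^ 2 :=
          integral_const_mul _ _
      _ ≤ (1 + ρ ^ 2) ^ (-s) * ∫ ξ, (1 + ‖ξ‖ ^ 2) ^ s * ‖Vhat ξ‖ ^ 2 := by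
          refine mul_le_mul_of_nonneg_left ?_ (Real.rpow_nonneg (by positivity) _)
          exact setIntegral_le_integral hiS hnn
      _ ≤ (1 + ρ ^ 2) ^ (-s) * Q ^ 2 :=
          mul_le_mul_of_nonneg_left hS (Real.rpow_nonneg (by positivity) _)
  -- rpow algebra
  have hρ3 : ρ ^ 3 = K ^ (6 / t) := by
    rw [hρdef, ← Real.rpow_natCast (K ^ (2 / t)) 3, ← Real.rpow_mul hK0.le]
    norm_num
    ring_nf
  have hhigh2 : (1 + ρ ^ 2 : ℝ) ^ (-s) ≤ K ^ (-(2 * β)) := by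
    have h1 : (1 + ρ ^ 2 : ℝ) ^ (-s) ≤ (ρ ^ 2) ^ (-s) :=
      Real.rpow_le_rpow_of_nonpos (by positivity) (by nlinarith) (by linarith)
    have hρ2 : (ρ:ℝ) ^ 2 = K ^ (4 / t) := by
      rw [hρdef, ← Real.rpow_natCast (K ^ (2 / t)) 2, ← Real.rpow_mul hK0.le]
      norm_num
      ring_nf
    have h2 : ((ρ:ℝ) ^ 2) ^ (-s) = K ^ (-(2 * β)) := by
      rw [hρ2, ← Real.rpow_mul hK0.le]
      congr 1
      rw [hβ]
      field_simp
      ring_nf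
      try exact Or.inl trivial
      try trivial
    linarith [h1, h2.le, h2.ge]
  have hK2 : K ^ (6 / t) * K ^ (-2:ℝ) = K ^ (-(2 * β)) := by
    rw [← Real.rpow_add hK0]
    congr 1
    rw [hβ]
    field_simp
    rw [ht]
    ring
  have hKβ : K ^ (-(2 * β)) = K ^ (-β) * K ^ (-β) := by
    rw [← Real.rpow_add hK0]; congr 1; ring
  have hKL : K ^ (-β) ≤ (2 * σ) ^ β * L ^ (-β) := by
    have hstep : K ^ (-β) ≤ (L / (2 * σ)) ^ (-β) := by
      refine Real.rpow_le_rpow_of_nonpos (by positivity) ?_ (by linarith)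
      calc L / (2 * σ) = (1 / (2 * σ)) * L := by ring
        _ ≤ K := hKσ
    have heq : (L / (2 * σ)) ^ (-β) = (2 * σ) ^ β * L ^ (-β) := by
      rw [Real.div_rpow hL0.le (by positivity), Real.rpow_neg (by positivity : (0:ℝ) ≤ 2 * σ),
        div_eq_mul_inv, inv_inv, mul_comm]
    linarith [heq.le, heq.ge]
  -- put it together
  have key : (∫ x, ‖V x‖ ^ 2) ≤
      c * C * (K ^ (6 / t) * ε ^ 2) + (c * C + Q ^ 2) * K ^ (-(2 * β)) := by
    rw [hPlan, hsplit]
    have e1 : ρ ^ 3 * c * (C * (ε ^ 2 + K ^ (-2:ℝ)))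
        = c * C * (K ^ (6 / t) * ε ^ 2) + c * C * K ^ (-(2 * β)) := by
      rw [hρ3, ← hK2]; ring
    have hQn : (0:ℝ) ≤ Q ^ 2 := by positivity
    have h3 := mul_le_mul_of_nonneg_right hhigh2 hQn
    linarith [hlow, hhigh]
  have hterm : (c * C + Q ^ 2) * K ^ (-(2 * β)) ≤
      (c * C + Q ^ 2) * ((2 * σ) ^ β * (K ^ (-β) * L ^ (-β))) := by
    refine mul_le_mul_of_nonneg_left ?_ (by positivity)
    rw [hKβ]
    calc K ^ (-β) * K ^ (-β) ≤ K ^ (-β) * ((2 * σ) ^ β * L ^ (-β)) :=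
          mul_le_mul_of_nonneg_left hKL (Real.rpow_nonneg hK0.le _)
      _ = (2 * σ) ^ β * (K ^ (-β) * L ^ (-β)) := by ring
  have hX : (0:ℝ) ≤ K ^ (6 / t) * ε ^ 2 := by positivity
  have hY : (0:ℝ) ≤ K ^ (-β) * L ^ (-β) := by positivity
  have hfinal : c * C * (K ^ (6 / t) * ε ^ 2) +
      (c * C + Q ^ 2) * ((2 * σ) ^ β * (K ^ (-β) * L ^ (-β))) ≤
      (c * C + Q ^ 2) * (1 + (2 * σ) ^ β) * (K ^ (6 / t) * ε ^ 2 + K ^ (-β) * L ^ (-β)) := by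
    have h2σ : (0:ℝ) ≤ (2 * σ) ^ β := by positivity
    have hA0 : (0:ℝ) ≤ c * C + Q ^ 2 := by positivity
    have hA : c * C ≤ c * C + Q ^ 2 := by linarith [sq_nonneg Q]
    nlinarith [mul_le_mul_of_nonneg_right hA hX,
      mul_nonneg (mul_nonneg hA0 h2σ) hX, mul_nonneg hA0 hY]
  linarith [key, hterm, hfinal]
end
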